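/- arXiv:2109.04481 — 2 statements merged into one kernel-verified Lean document; each statement's English description precedes it below -/
import Mathlib

section
/- Monotonicity of R_max under conditioning through free maps implies: if Ω(ρ) < Ω(ρ') (with Ω(ρ') possibly infinite), then there is no sequence of positive linear free maps E_n (E_n(cone(F)) ⊆ cone(F)) with Tr E_n(ρ) > 0 and E_n(ρ)/Tr E_n(ρ) → ρ'; i.e., ρ' cannot even be approached asymptotically from ρ by free probabilistic protocols, provided Ω is lower semicontinuous. -/
open scoped ENNReal NNReal ComplexOrder
open Matrix

variable {ι κ : Type*}

/-- Max-relative entropy (non-logarithmic): `inf { λ ≥ 0 : ρ ≤ λσ }`, with `inf ∅ = ∞`.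
Here `A ≤ B` means `B - A` is positive semidefinite. -/
noncomputable def Rmax [Fintype ι] (ρ σ : Matrix ι ι ℂ) : ℝ≥0∞ :=
  sInf {x : ℝ≥0∞ | ∃ l : ℝ≥0, x = (l : ℝ≥0∞) ∧ ((l : ℝ) • σ - ρ).PosSemidef}

/-- A state: positive semidefinite with unit trace. -/
def IsState [Fintype ι] (ρ : Matrix ι ι ℂ) : Prop :=
  ρ.PosSemidef ∧ ρ.trace = 1

/-- A pure state: a rank-one (idempotent) state. -/
def IsPure [Fintype ι] (φ : Matrix ι ι ℂ) : Prop :=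
  φ.PosSemidef ∧ φ * φ = φ ∧ φ.trace = 1

/-- The cone generated by a set of states. -/
noncomputable def cone (F : Set (Matrix ι ι ℂ)) : Set (Matrix ι ι ℂ) :=
  {x | ∃ (l : ℝ≥0) (σ : Matrix ι ι ℂ), σ ∈ F ∧ x = (l : ℝ) • σ}

/-- Projective robustness `Ω(ρ) = inf_{σ ∈ F} Rmax(ρ‖σ) Rmax(σ‖ρ)`. -/
noncomputable def Omega [Fintype ι] (F : Set (Matrix ι ι ℂ)) (ρ : Matrix ι ι ℂ) : ℝ≥0∞ :=
  ⨅ σ ∈ F, Rmax ρ σ * Rmax σ ρ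

/-- Support of an operator, as the range of the associated linear map. -/
noncomputable def msupport [Fintype ι] (ρ : Matrix ι ι ℂ) : Submodule ℂ (ι → ℂ) :=
  LinearMap.range ρ.mulVecLin

/-- A positive linear map on matrices. -/
def IsPosMap [Fintype ι] [Fintype κ] (E : Matrix ι ι ℂ →ₗ[ℂ] Matrix κ κ ℂ) : Prop :=
  ∀ ρ, ρ.PosSemidef → (E ρ).PosSemidef

/-- Maximal fidelity with the free set: `F_F(φ) = max_{σ ∈ F} ⟨φ|σ|φ⟩ = max_{σ ∈ F} Tr(φσ)`. -/
noncomputable def Ffree [Fintype ι] (F : Set (Matrix ι ι ℂ)) (φ : Matrix ι ι ℂ) : ℝ :=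
  sSup {x : ℝ | ∃ σ ∈ F, x = ((φ * σ).trace).re}
lemma real_smul_eq (r : ℝ) (M : Matrix ι ι ℂ) : r • M = (r : ℂ) • M := by
  ext i j; simp [Matrix.smul_apply, Complex.real_smul]

lemma psd_smul [Fintype ι] [DecidableEq ι] {M : Matrix ι ι ℂ} (hM : M.PosSemidef) {r : ℝ} (hr : 0 ≤ r) :
    (r • M).PosSemidef := by
  rw [real_smul_eq]
  refine Matrix.PosSemidef.of_dotProduct_mulVec_nonneg ?_ fun x => ?_
  · unfold Matrix.IsHermitian
    rw [Matrix.conjTranspose_smul, hM.1.eq]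
    simp
  · rw [Matrix.smul_mulVec, dotProduct_smul, smul_eq_mul]
    exact mul_nonneg (by exact_mod_cast Complex.zero_le_real.mpr hr) (hM.dotProduct_mulVec_nonneg x)

lemma diag_nn [Fintype ι] [DecidableEq ι] {M : Matrix ι ι ℂ} (hM : M.PosSemidef) (i : ι) : 0 ≤ M i i := by
  have := hM.dotProduct_mulVec_nonneg (Pi.single i 1)
  simpa [dotProduct, Pi.single_apply, Matrix.mulVec] using this

lemma trace_im_zero [Fintype ι] [DecidableEq ι] {M : Matrix ι ι ℂ} (hM : M.PosSemidef) : M.trace.im = 0 := by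
  have : M.trace.im = ∑ i, (M i i).im := by
    simp [Matrix.trace, Matrix.diag, Complex.im_sum]
  rw [this]
  exact Finset.sum_eq_zero fun i _ => ((Complex.le_def.mp (diag_nn hM i)).2).symm

lemma trace_re_nonneg [Fintype ι] [DecidableEq ι] {M : Matrix ι ι ℂ} (hM : M.PosSemidef) : 0 ≤ M.trace.re := by
  have : M.trace.re = ∑ i, (M i i).re := by
    simp [Matrix.trace, Matrix.diag, Complex.re_sum]
  rw [this]
  exact Finset.sum_nonneg fun i _ => (Complex.le_def.mp (diag_nn hM i)).1

lemma trace_eq_re [Fintype ι] [DecidableEq ι] {M : Matrix ι ι ℂ} (hM : M.PosSemidef) : M.trace = (M.trace.re : ℂ) :=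
  Complex.ext (by simp) (by simp [trace_im_zero hM])

/-- feasible coefficients between states are `≥ 1`. -/
lemma feas_ge_one [Fintype ι] [DecidableEq ι] {ρ σ : Matrix ι ι ℂ} (hρ : IsState ρ) (hσ : IsState σ) {l : ℝ≥0}
    (h : ((l : ℝ) • σ - ρ).PosSemidef) : 1 ≤ l := by
  have h1 := trace_re_nonneg h
  have : ((l : ℝ) • σ - ρ).trace = ((l : ℝ) - 1 : ℝ) := by
    rw [Matrix.trace_sub, Matrix.trace_smul, hρ.2, hσ.2]
    push_cast [Complex.real_smul]
    ring
  rw [this] at h1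
  simp only [Complex.ofReal_re] at h1
  have : (1 : ℝ) ≤ (l : ℝ) := by linarith
  exact_mod_cast this

lemma Rmax_one_le [Fintype ι] [DecidableEq ι] {ρ σ : Matrix ι ι ℂ} (hρ : IsState ρ) (hσ : IsState σ) :
    1 ≤ Rmax ρ σ := by
  refine le_sInf fun x hx => ?_
  obtain ⟨l, rfl, hl⟩ := hx
  exact_mod_cast feas_ge_one hρ hσ hl

lemma normalized_state [Fintype ι] [DecidableEq ι] {E : Matrix ι ι ℂ →ₗ[ℂ] Matrix ι ι ℂ} (hpos : IsPosMap E)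
    {ρ : Matrix ι ι ℂ} (hρ : IsState ρ) (ht : 0 < ((E ρ).trace).re) :
    IsState ((((E ρ).trace).re)⁻¹ • E ρ) := by
  have hEρ := hpos ρ hρ.1
  refine ⟨psd_smul hEρ (inv_nonneg.mpr ht.le), ?_⟩
  rw [Matrix.trace_smul, trace_eq_re hEρ, Complex.real_smul, Complex.ofReal_re,
    ← Complex.ofReal_mul, inv_mul_cancel₀ ht.ne', Complex.ofReal_one]

lemma omega_mono [Fintype ι] [DecidableEq ι] (F : Set (Matrix ι ι ℂ)) (hFstate : ∀ σ ∈ F, IsState σ)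
    {E : Matrix ι ι ℂ →ₗ[ℂ] Matrix ι ι ℂ} (hpos : IsPosMap E)
    (hfree : ∀ x ∈ cone F, E x ∈ cone F)
    {ρ : Matrix ι ι ℂ} (hρ : IsState ρ) (ht : 0 < ((E ρ).trace).re) :
    Omega F ((((E ρ).trace).re)⁻¹ • E ρ) ≤ Omega F ρ := by
  set t : ℝ := ((E ρ).trace).re with htdef
  set ρ'' : Matrix ι ι ℂ := t⁻¹ • E ρ with hρ''def
  have hρ''state : IsState ρ'' := normalized_state hpos hρ ht
  have hOm : Omega F ρ = ⨅ σ ∈ F, Rmax ρ σ * Rmax σ ρ := rfl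
  rw [hOm]
  refine le_iInf₂ fun σ hσ => ?_
  have hσstate := hFstate σ hσ
  have hσcone : σ ∈ cone F := ⟨1, σ, hσ, by norm_num⟩
  obtain ⟨l, τ, hτF, hEσ⟩ := hfree σ hσcone
  have hτstate := hFstate τ hτF
  -- main claim: for any feasible pair, `Omega F ρ'' ≤ a * b`
  have key : ∀ (a b : ℝ≥0), (((a : ℝ)) • σ - ρ).PosSemidef →
      (((b : ℝ)) • ρ - σ).PosSemidef → Omega F ρ'' ≤ (a : ℝ≥0∞) * (b : ℝ≥0∞) := by
    intro a b ha hb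
    have hmap : ∀ (r : ℝ) (M N : Matrix ι ι ℂ), E (r • M - N) = r • E M - E N := by
      intro r M N
      rw [map_sub, real_smul_eq, E.map_smul, ← real_smul_eq]
    -- first: l ≠ 0
    have hl0 : l ≠ 0 := by
      intro h0
      have hEσ0 : E σ = 0 := by rw [hEσ, h0]; simp
      have hpsd : ((a : ℝ) • E σ - E ρ).PosSemidef := hmap _ _ _ ▸ hpos _ ha
      rw [hEσ0, smul_zero, zero_sub] at hpsd
      have := trace_re_nonneg hpsd
      rw [Matrix.trace_neg, Complex.neg_re] at this
      linarith
    have hlpos : (0 : ℝ) < (l : ℝ) := by positivity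
    set T : ℝ≥0 := ⟨t, ht.le⟩ with hTdef
    have hT0 : T ≠ 0 := by
      intro h; apply ht.ne'; exact congrArg Subtype.val h
    have hTcoe : (T : ℝ) = t := rfl
    -- feasibility 1 : (a*l/T) • τ - ρ'' is PSD
    have feas1 : (((a * l / T : ℝ≥0) : ℝ) • τ - ρ'').PosSemidef := by
      have hpsd : ((a : ℝ) • E σ - E ρ).PosSemidef := hmap _ _ _ ▸ hpos _ ha
      have e3 : ((a * l / T : ℝ≥0) : ℝ) = t⁻¹ * ((a : ℝ) * (l : ℝ)) := by
        push_cast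
        rw [hTcoe]
        field_simp
      have heq : ((a * l / T : ℝ≥0) : ℝ) • τ - ρ'' = t⁻¹ • ((a : ℝ) • E σ - E ρ) := by
        simp only [hρ''def, hEσ, smul_sub, smul_smul, e3]
      rw [heq]
      exact psd_smul hpsd (inv_nonneg.mpr ht.le)
    -- feasibility 2 : (b*T/l) • ρ'' - τ is PSD
    have feas2 : (((b * T / l : ℝ≥0) : ℝ) • ρ'' - τ).PosSemidef := by
      have hpsd : ((b : ℝ) • E ρ - E σ).PosSemidef := hmap _ _ _ ▸ hpos _ hb
      have e1 : ((l : ℝ))⁻¹ * (l : ℝ) = 1 := inv_mul_cancel₀ hlpos.ne'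
      have e2 : ((b * T / l : ℝ≥0) : ℝ) * t⁻¹ = ((l : ℝ))⁻¹ * (b : ℝ) := by
        push_cast
        rw [hTcoe]
        field_simp
      have heq : ((b * T / l : ℝ≥0) : ℝ) • ρ'' - τ =
          ((l : ℝ))⁻¹ • ((b : ℝ) • E ρ - E σ) := by
        simp only [hρ''def, hEσ, smul_sub, smul_smul, e2, e1, one_smul]
      rw [heq]
      exact psd_smul hpsd (inv_nonneg.mpr hlpos.le)
    have h1 : Rmax ρ'' τ ≤ ((a * l / T : ℝ≥0) : ℝ≥0∞) := sInf_le ⟨_, rfl, feas1⟩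
    have h2 : Rmax τ ρ'' ≤ ((b * T / l : ℝ≥0) : ℝ≥0∞) := sInf_le ⟨_, rfl, feas2⟩
    calc Omega F ρ'' ≤ Rmax ρ'' τ * Rmax τ ρ'' := iInf₂_le τ hτF
      _ ≤ ((a * l / T : ℝ≥0) : ℝ≥0∞) * ((b * T / l : ℝ≥0) : ℝ≥0∞) := mul_le_mul' h1 h2
      _ = (((a * l / T) * (b * T / l) : ℝ≥0) : ℝ≥0∞) := by rw [ENNReal.coe_mul]
      _ = ((a * b : ℝ≥0) : ℝ≥0∞) := by
          congr 1
          field_simp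
      _ = (a : ℝ≥0∞) * (b : ℝ≥0∞) := by rw [ENNReal.coe_mul]
  -- now conclude
  by_contra hcon
  push_neg at hcon
  set A := Rmax ρ σ with hA
  set B := Rmax σ ρ with hB
  set c := Omega F ρ'' with hc
  have hB1 : 1 ≤ B := Rmax_one_le hσstate hρ
  have hA1 : 1 ≤ A := Rmax_one_le hρ hσstate
  have hBne : B ≠ 0 := by intro h; rw [h] at hB1; exact (not_le.mpr zero_lt_one) hB1
  have hAne : A ≠ 0 := by intro h; rw [h] at hA1; exact (not_le.mpr zero_lt_one) hA1
  have hBtop : B ≠ ⊤ := by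
    intro h
    rw [h, ENNReal.mul_top hAne] at hcon
    exact (not_le.mpr hcon) le_top
  have hAtop : A ≠ ⊤ := by
    intro h
    rw [h, ENNReal.top_mul hBne] at hcon
    exact (not_le.mpr hcon) le_top
  have hAlt : A < c / B := (ENNReal.lt_div_iff_mul_lt (Or.inl hBne) (Or.inl hBtop)).mpr hcon
  rw [hA, Rmax] at hAlt
  obtain ⟨x, hxmem, hxlt⟩ := sInf_lt_iff.mp hAlt
  obtain ⟨a, rfl, hafeas⟩ := hxmem
  have hxB : (a : ℝ≥0∞) * B < c :=
    (ENNReal.lt_div_iff_mul_lt (Or.inl hBne) (Or.inl hBtop)).mp hxlt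
  have ha1 : (1 : ℝ≥0) ≤ a := feas_ge_one hρ hσstate hafeas
  have hane : (a : ℝ≥0∞) ≠ 0 := by exact_mod_cast (zero_lt_one.trans_le ha1).ne'
  have hBlt : B < c / (a : ℝ≥0∞) := by
    rw [ENNReal.lt_div_iff_mul_lt (Or.inl hane) (Or.inl ENNReal.coe_ne_top), mul_comm]
    exact hxB
  rw [hB, Rmax] at hBlt
  obtain ⟨y, hymem, hylt⟩ := sInf_lt_iff.mp hBlt
  obtain ⟨b, rfl, hbfeas⟩ := hymem
  have hyx : (b : ℝ≥0∞) * (a : ℝ≥0∞) < c :=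
    (ENNReal.lt_div_iff_mul_lt (Or.inl hane) (Or.inl ENNReal.coe_ne_top)).mp hylt
  have hle := key a b hafeas hbfeas
  rw [mul_comm] at hyx
  exact (not_le.mpr hyx) hle


/-- if `Ω(ρ) < Ω(ρ')` and `Ω` is lower semicontinuous on states, then `ρ'` cannot
even be approached asymptotically from `ρ` by free probabilistic protocols. -/
theorem omega_no_asymptotic_approach [Fintype ι] [DecidableEq ι]
    (F : Set (Matrix ι ι ℂ)) (hFne : F.Nonempty) (hFcpt : IsCompact F)
    (hFconv : Convex ℝ F) (hFstate : ∀ σ ∈ F, IsState σ)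
    (ρ ρ' : Matrix ι ι ℂ) (hρ : IsState ρ) (hρ' : IsState ρ')
    (hlsc : LowerSemicontinuousOn (Omega F) {x : Matrix ι ι ℂ | IsState x})
    (hlt : Omega F ρ < Omega F ρ') :
    ¬ ∃ E : ℕ → (Matrix ι ι ℂ →ₗ[ℂ] Matrix ι ι ℂ),
      (∀ k, IsPosMap (E k)) ∧
      (∀ k, ∀ x ∈ cone F, E k x ∈ cone F) ∧
      (∀ k, 0 < (((E k) ρ).trace).re) ∧
      Filter.Tendsto (fun k => ((((E k) ρ).trace).re)⁻¹ • (E k) ρ)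
        Filter.atTop (nhds ρ') := by
  rintro ⟨E, hEpos, hEfree, hEtr, hEconv⟩
  have hmono : ∀ k, Omega F ((((E k) ρ).trace.re)⁻¹ • (E k) ρ) ≤ Omega F ρ :=
    fun k => omega_mono F hFstate (hEpos k) (hEfree k) hρ (hEtr k)
  have hstate : ∀ k, ((((E k) ρ).trace.re)⁻¹ • (E k) ρ) ∈ {x : Matrix ι ι ℂ | IsState x} :=
    fun k => normalized_state (hEpos k) hρ (hEtr k)
  have htendW : Filter.Tendsto (fun k => ((((E k) ρ).trace).re)⁻¹ • (E k) ρ)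
      Filter.atTop (nhdsWithin ρ' {x | IsState x}) :=
    tendsto_nhdsWithin_of_tendsto_nhds_of_eventually_within _ hEconv
      (Filter.Eventually.of_forall hstate)
  have hev := hlsc ρ' hρ' (Omega F ρ) hlt
  obtain ⟨k, hk⟩ := (htendW.eventually hev).exists
  exact absurd (hmono k) (not_le.mpr hk)
end

section
/- Lower semicontinuity of the projective robustness: if F is compact and convex, then Ω: states → [1,∞] defined by Ω(ρ) := min over σ ∈ F of R_max(ρ‖σ)·R_max(σ‖ρ) is lower semicontinuous with respect to the norm topology on states. -/
open scoped ENNReal NNReal ComplexOrder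
open Matrix

variable {ι κ : Type*}

section Helpers
variable {ι : Type*}


lemma psd_isClosed [Fintype ι] : IsClosed {A : Matrix ι ι ℂ | A.PosSemidef} := by
  have hset : {A : Matrix ι ι ℂ | A.PosSemidef} =
      {A : Matrix ι ι ℂ | Aᴴ = A} ∩
        ⋂ x : ι → ℂ, {A : Matrix ι ι ℂ | 0 ≤ dotProduct (star x) (A *ᵥ x)} := by
    ext A
    simp only [Set.mem_setOf_eq, Set.mem_inter_iff, Set.mem_iInter, Matrix.posSemidef_iff_dotProduct_mulVec,
      Matrix.IsHermitian]
  rw [hset]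
  refine (isClosed_eq (continuous_id.matrix_conjTranspose) continuous_id).inter
    (isClosed_iInter fun x => ?_)
  have hc : Continuous fun A : Matrix ι ι ℂ => dotProduct (star x) (A *ᵥ x) := by
    exact continuous_const.dotProduct (continuous_id.matrix_mulVec continuous_const)
  have hcl : IsClosed {z : ℂ | 0 ≤ z} := by
    have : {z : ℂ | 0 ≤ z} = Complex.re ⁻¹' (Set.Ici 0) ∩ Complex.im ⁻¹' {0} := by
      ext z
      simp [Complex.le_def, eq_comm]
    rw [this]
    exact (isClosed_Ici.preimage Complex.continuous_re).inter
      (isClosed_singleton.preimage Complex.continuous_im)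
  exact hcl.preimage hc

lemma psd_trace_nonneg [Fintype ι] [DecidableEq ι] {A : Matrix ι ι ℂ} (hA : A.PosSemidef) :
    0 ≤ A.trace := by
  rw [Matrix.trace]
  refine Finset.sum_nonneg fun i _ => ?_
  have := hA.dotProduct_mulVec_nonneg (Pi.single i 1)
  have hstar : star (Pi.single i 1 : ι → ℂ) = Pi.single i 1 := by
    funext j
    simp [Pi.single_apply, apply_ite]
  rw [hstar, single_dotProduct] at this
  simpa [Matrix.mulVec_single] using this


lemma one_le_of_psd_sub [Fintype ι] [DecidableEq ι] {ρ σ : Matrix ι ι ℂ}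
    (hρ : ρ.trace = 1) (hσ : σ.trace = 1) {l : ℝ≥0}
    (h : ((l : ℝ) • σ - ρ).PosSemidef) : 1 ≤ l := by
  have h0 := psd_trace_nonneg h
  rw [Matrix.trace_sub, Matrix.trace_smul, hρ, hσ, Complex.real_smul, mul_one] at h0
  have : (0:ℝ) ≤ (l:ℝ) - 1 := by
    have := (Complex.le_def.1 h0).1
    simpa using this
  have : (1:ℝ) ≤ (l:ℝ) := by linarith
  exact_mod_cast this

lemma Rmax_le_of_psd [Fintype ι] {ρ σ : Matrix ι ι ℂ} {l : ℝ≥0}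
    (h : ((l : ℝ) • σ - ρ).PosSemidef) : Rmax ρ σ ≤ (l : ℝ≥0∞) :=
  sInf_le ⟨l, rfl, h⟩

lemma one_le_Rmax [Fintype ι] [DecidableEq ι] {ρ σ : Matrix ι ι ℂ}
    (hρ : ρ.trace = 1) (hσ : σ.trace = 1) : 1 ≤ Rmax ρ σ := by
  refine le_sInf fun x hx => ?_
  obtain ⟨l, rfl, hl⟩ := hx
  exact_mod_cast one_le_of_psd_sub hρ hσ hl

lemma exists_witness [Fintype ι] [DecidableEq ι] {ρ σ : Matrix ι ι ℂ}
    (hρ : ρ.trace = 1) (hσ : σ.trace = 1) {Y : ℝ≥0}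
    (h : Rmax ρ σ * Rmax σ ρ < (Y : ℝ≥0∞)) :
    ∃ a b : ℝ≥0, 1 ≤ a ∧ 1 ≤ b ∧ a * b < Y ∧
      ((a : ℝ) • σ - ρ).PosSemidef ∧ ((b : ℝ) • ρ - σ).PosSemidef := by
  have h1 : (1:ℝ≥0∞) ≤ Rmax ρ σ := one_le_Rmax hρ hσ
  have h2 : (1:ℝ≥0∞) ≤ Rmax σ ρ := one_le_Rmax hσ hρ
  have h2ne0 : Rmax σ ρ ≠ 0 := by positivity
  have h2nt : Rmax σ ρ ≠ ∞ := by
    intro he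
    rw [he, ENNReal.mul_top (by positivity)] at h
    exact not_top_lt h
  have hd : Rmax ρ σ < (Y : ℝ≥0∞) / Rmax σ ρ :=
    (ENNReal.lt_div_iff_mul_lt (Or.inl h2ne0) (Or.inl h2nt)).2 h
  obtain ⟨x, hxS, hxlt⟩ := sInf_lt_iff.1 hd
  obtain ⟨a, rfl, hps1⟩ := hxS
  have ha1 : 1 ≤ a := one_le_of_psd_sub hρ hσ hps1
  have haY : (a : ℝ≥0∞) * Rmax σ ρ < Y :=
    (ENNReal.lt_div_iff_mul_lt (Or.inl h2ne0) (Or.inl h2nt)).1 hxlt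
  have hane0 : (a : ℝ≥0∞) ≠ 0 := by
    simp only [ne_eq, ENNReal.coe_eq_zero]
    exact fun h0 => by simp [h0] at ha1
  have hd2 : Rmax σ ρ < (Y : ℝ≥0∞) / (a : ℝ≥0∞) := by
    rw [mul_comm] at haY
    exact (ENNReal.lt_div_iff_mul_lt (Or.inl hane0) (Or.inl ENNReal.coe_ne_top)).2 haY
  obtain ⟨x2, hxS2, hxlt2⟩ := sInf_lt_iff.1 hd2
  obtain ⟨b, rfl, hps2⟩ := hxS2
  have hb1 : 1 ≤ b := one_le_of_psd_sub hσ hρ hps2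
  have hbY : (b : ℝ≥0∞) * (a : ℝ≥0∞) < Y :=
    (ENNReal.lt_div_iff_mul_lt (Or.inl hane0) (Or.inl ENNReal.coe_ne_top)).1 hxlt2
  refine ⟨a, b, ha1, hb1, ?_, hps1, hps2⟩
  rw [mul_comm] at hbY
  exact_mod_cast hbY

instance matrixFirstCountable [Countable ι] :
    FirstCountableTopology (Matrix ι ι ℂ) :=
  inferInstanceAs (FirstCountableTopology (ι → ι → ℂ))


end Helpers

/-- lower semicontinuity of the projective robustness on states, for `F` compact
and convex. -/
theorem omega_lowerSemicontinuousOn [Fintype ι] [DecidableEq ι]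
    (F : Set (Matrix ι ι ℂ)) (hFne : F.Nonempty) (hFcpt : IsCompact F)
    (hFconv : Convex ℝ F) (hFstate : ∀ σ ∈ F, IsState σ) :
    LowerSemicontinuousOn (Omega F) {ρ : Matrix ι ι ℂ | IsState ρ} := by
  intro ρ hρ y hy
  by_contra hcon
  rw [Filter.not_eventually] at hcon
  simp only [not_lt] at hcon
  obtain ⟨Y, hyY, hYΩ⟩ := ENNReal.lt_iff_exists_nnreal_btwn.1 hy
  have hfreq : ∃ᶠ x in nhds ρ, Omega F x ≤ y ∧ x ∈ {ρ : Matrix ι ι ℂ | IsState ρ} := by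
    rwa [← frequently_nhdsWithin_iff]
  have hclos : ρ ∈ closure {x : Matrix ι ι ℂ | Omega F x ≤ y ∧ IsState x} :=
    mem_closure_iff_frequently.2 hfreq
  obtain ⟨u, hu, hulim⟩ := mem_closure_iff_seq_limit.1 hclos
  have hwit : ∀ n : ℕ, ∃ σ ∈ F, ∃ a b : ℝ≥0, 1 ≤ a ∧ 1 ≤ b ∧ a * b < Y ∧
      ((a : ℝ) • σ - u n).PosSemidef ∧ ((b : ℝ) • u n - σ).PosSemidef := by
    intro n
    have hΩ : Omega F (u n) < (Y : ℝ≥0∞) := lt_of_le_of_lt (hu n).1 hyY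
    rw [Omega, iInf_lt_iff] at hΩ
    obtain ⟨σ, hσ⟩ := hΩ
    rw [iInf_lt_iff] at hσ
    obtain ⟨hσF, hlt⟩ := hσ
    obtain ⟨a, b, ha, hb, hab, h1, h2⟩ :=
      exists_witness (hu n).2.2 (hFstate σ hσF).2 hlt
    exact ⟨σ, hσF, a, b, ha, hb, hab, h1, h2⟩
  choose σ hσF a b ha1 hb1 hab hps1 hps2 using hwit
  have haY : ∀ n, a n ∈ Set.Icc (1:ℝ≥0) Y := fun n =>
    ⟨ha1 n, le_of_lt (lt_of_le_of_lt (le_mul_of_one_le_right zero_le (hb1 n)) (hab n))⟩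
  have hbY : ∀ n, b n ∈ Set.Icc (1:ℝ≥0) Y := fun n =>
    ⟨hb1 n, le_of_lt (lt_of_le_of_lt (le_mul_of_one_le_left zero_le (ha1 n)) (hab n))⟩
  have hKcpt : IsCompact (F ×ˢ (Set.Icc (1:ℝ≥0) Y ×ˢ Set.Icc (1:ℝ≥0) Y)) :=
    hFcpt.prod (isCompact_Icc.prod isCompact_Icc)
  have hmem : ∀ n, (σ n, (a n, b n)) ∈ F ×ˢ (Set.Icc (1:ℝ≥0) Y ×ˢ Set.Icc (1:ℝ≥0) Y) :=
    fun n => ⟨hσF n, haY n, hbY n⟩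
  obtain ⟨⟨σ', a', b'⟩, hLmem, φ, hφmono, hφlim⟩ := hKcpt.tendsto_subseq hmem
  obtain ⟨hσ'F, ha'mem, hb'mem⟩ := hLmem
  have hσlim : Filter.Tendsto (fun k => σ (φ k)) Filter.atTop (nhds σ') :=
    ((continuous_fst.tendsto _).comp hφlim)
  have halim : Filter.Tendsto (fun k => a (φ k)) Filter.atTop (nhds a') :=
    ((continuous_fst.tendsto _).comp ((continuous_snd.tendsto _).comp hφlim))
  have hblim : Filter.Tendsto (fun k => b (φ k)) Filter.atTop (nhds b') :=
    ((continuous_snd.tendsto _).comp ((continuous_snd.tendsto _).comp hφlim))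
  have hulim' : Filter.Tendsto (fun k => u (φ k)) Filter.atTop (nhds ρ) :=
    hulim.comp hφmono.tendsto_atTop
  have haR : Filter.Tendsto (fun k => ((a (φ k) : ℝ))) Filter.atTop (nhds (a' : ℝ)) :=
    (NNReal.continuous_coe.tendsto _).comp halim
  have hbR : Filter.Tendsto (fun k => ((b (φ k) : ℝ))) Filter.atTop (nhds (b' : ℝ)) :=
    (NNReal.continuous_coe.tendsto _).comp hblim
  have hpsd1 : ((a' : ℝ) • σ' - ρ).PosSemidef := by
    refine psd_isClosed.mem_of_tendsto ((haR.smul hσlim).sub hulim')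
      (Filter.Eventually.of_forall fun k => ?_)
    exact hps1 (φ k)
  have hpsd2 : ((b' : ℝ) • ρ - σ').PosSemidef := by
    refine psd_isClosed.mem_of_tendsto ((hbR.smul hulim').sub hσlim)
      (Filter.Eventually.of_forall fun k => ?_)
    exact hps2 (φ k)
  have habY : a' * b' ≤ Y := by
    refine le_of_tendsto (halim.mul hblim) (Filter.Eventually.of_forall fun k => ?_)
    exact le_of_lt (hab (φ k))
  have hfinal : Omega F ρ ≤ (Y : ℝ≥0∞) := by
    calc Omega F ρ ≤ Rmax ρ σ' * Rmax σ' ρ := iInf₂_le σ' hσ'F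
    _ ≤ (a' : ℝ≥0∞) * (b' : ℝ≥0∞) :=
        mul_le_mul' (Rmax_le_of_psd hpsd1) (Rmax_le_of_psd hpsd2)
    _ ≤ (Y : ℝ≥0∞) := by exact_mod_cast habY
  exact absurd hYΩ (not_lt.2 hfinal)
end
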